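/- Let q be a positive real number, q ≠ 1, and define an inner product on complex polynomials in one variable by ⟨P, Q⟩ = (conj(P)(D^q) Q)(0), where D^q is the one-variable q-Dunkl operator with parameter μ > 0. Then ⟨x^a, x^b⟩ = δ_{a,b} ∏_{j=1}^{a} [μ, j; q], and this is a positive definite Hermitian inner product on polynomials. -/

import Mathlib

open Polynomial

/-- Rescaling the variable by `c`: `(T_c p)(x) = p(cx)`. -/
noncomputable def varScale1 (c : ℂ) (p : Polynomial ℂ) : Polynomial ℂ :=
  p.comp (C c * X)

/-- The one-variable q-Dunkl operator
`D^q = (q^μ/(q−q⁻¹))(T_q − r)/x − (q^{−μ}/(q−q⁻¹))(T_q⁻¹ − r)/x`. -/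
noncomputable def qDunkl1 (q : ℂ) (μ : ℝ) (p : Polynomial ℂ) : Polynomial ℂ :=
  (q ^ ((μ : ℝ) : ℂ) / (q - q⁻¹)) • (varScale1 q p - varScale1 (-1) p).divX
    - (q ^ ((-μ : ℝ) : ℂ) / (q - q⁻¹)) • (varScale1 q⁻¹ p - varScale1 (-1) p).divX

/-- The q-Dunkl-Fischer pairing `⟨P, Q⟩ = (conj(P)(D^q) Q)(0)`. -/
noncomputable def qFischer (q : ℂ) (μ : ℝ) (P Q : Polynomial ℂ) : ℂ :=
  Polynomial.eval 0
    (∑ k ∈ Finset.range (P.natDegree + 1),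
      (starRingEnd ℂ) (P.coeff k) • (qDunkl1 q μ)^[k] Q)

/-- The q-number bracket `[μ, j; q] = [μ+j]_q − (−1)^j [μ]_q`. -/
noncomputable def muBracket (q : ℂ) (μ : ℝ) (j : ℕ) : ℂ :=
  (q ^ ((μ + (j : ℝ)) : ℂ) - q ^ ((-(μ + (j : ℝ)) : ℝ) : ℂ)) / (q - q⁻¹)
    - (-1 : ℂ) ^ j * ((q ^ ((μ : ℝ) : ℂ) - q ^ ((-μ : ℝ) : ℂ)) / (q - q⁻¹))


lemma divX_smul' (a : ℂ) (p : ℂ[X]) : (a • p).divX = a • p.divX := by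
  ext n; simp [coeff_divX]

lemma varScale1_smul (c a : ℂ) (p : ℂ[X]) : varScale1 c (a • p) = a • varScale1 c p := by
  simp [varScale1, smul_comp]

lemma varScale1_add (c : ℂ) (p r : ℂ[X]) :
    varScale1 c (p + r) = varScale1 c p + varScale1 c r := by
  simp [varScale1, add_comp]

lemma qDunkl1_smul (q : ℂ) (μ : ℝ) (a : ℂ) (p : ℂ[X]) :
    qDunkl1 q μ (a • p) = a • qDunkl1 q μ p := by
  simp only [qDunkl1, varScale1_smul, ← smul_sub, divX_smul']
  module

lemma qDunkl1_add (q : ℂ) (μ : ℝ) (p r : ℂ[X]) :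
    qDunkl1 q μ (p + r) = qDunkl1 q μ p + qDunkl1 q μ r := by
  simp only [qDunkl1, varScale1_add]
  rw [show varScale1 q p + varScale1 q r - (varScale1 (-1) p + varScale1 (-1) r)
      = (varScale1 q p - varScale1 (-1) p) + (varScale1 q r - varScale1 (-1) r) by ring,
    show varScale1 q⁻¹ p + varScale1 q⁻¹ r - (varScale1 (-1) p + varScale1 (-1) r)
      = (varScale1 q⁻¹ p - varScale1 (-1) p) + (varScale1 q⁻¹ r - varScale1 (-1) r) by ring,
    divX_add, divX_add, smul_add, smul_add]
  abel

lemma varScale1_X_pow (c : ℂ) (n : ℕ) : varScale1 c (X ^ n) = C (c ^ n) * X ^ n := by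
  rw [varScale1, pow_comp, X_comp, mul_pow, ← C_pow]

lemma muBracket_zero (q : ℂ) (μ : ℝ) : muBracket q μ 0 = 0 := by
  simp [muBracket]
lemma muBracket_succ {q : ℂ} (hq : q ≠ 0) (μ : ℝ) (m : ℕ) :
    muBracket q μ (m + 1)
      = q ^ ((μ : ℝ) : ℂ) / (q - q⁻¹) * (q ^ (m + 1) - (-1 : ℂ) ^ (m + 1))
        - q ^ ((-μ : ℝ) : ℂ) / (q - q⁻¹) * ((q⁻¹) ^ (m + 1) - (-1 : ℂ) ^ (m + 1)) := by
  have h3 : ((((m + 1 : ℕ) : ℝ)) : ℂ) = ((m + 1 : ℕ) : ℂ) := by push_cast; ring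
  have h2 : ((-(μ + ((m + 1 : ℕ) : ℝ)) : ℝ) : ℂ)
      = ((-μ : ℝ) : ℂ) + (-((m + 1 : ℕ) : ℂ)) := by push_cast; ring
  rw [muBracket, h3, h2, Complex.cpow_add _ _ hq, Complex.cpow_add _ _ hq,
    Complex.cpow_natCast, Complex.cpow_neg, Complex.cpow_natCast, ← inv_pow]
  ring

lemma qDunkl1_X_pow {q : ℂ} (hq : q ≠ 0) (μ : ℝ) (b : ℕ) :
    qDunkl1 q μ (X ^ b) = muBracket q μ b • X ^ (b - 1) := by
  cases b with
  | zero =>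
    simp [qDunkl1, varScale1, muBracket_zero]
  | succ m =>
    rw [qDunkl1, varScale1_X_pow, varScale1_X_pow, varScale1_X_pow,
      ← sub_mul, ← sub_mul, ← C_sub, ← C_sub, divX_C_mul, divX_C_mul, divX_X_pow]
    simp only [Nat.succ_ne_zero, if_false, Nat.add_sub_cancel]
    rw [smul_eq_C_mul, smul_eq_C_mul, smul_eq_C_mul, muBracket_succ hq,
      ← mul_assoc, ← mul_assoc, ← C_mul, ← C_mul, ← sub_mul, ← C_sub]
lemma qDunkl1_iterate_smul (q : ℂ) (μ : ℝ) (k : ℕ) (a : ℂ) (p : ℂ[X]) :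
    (qDunkl1 q μ)^[k] (a • p) = a • (qDunkl1 q μ)^[k] p := by
  induction k generalizing p with
  | zero => simp
  | succ n ih => simp only [Function.iterate_succ_apply, qDunkl1_smul, ih]

lemma qDunkl1_iterate_add (q : ℂ) (μ : ℝ) (k : ℕ) (p r : ℂ[X]) :
    (qDunkl1 q μ)^[k] (p + r) = (qDunkl1 q μ)^[k] p + (qDunkl1 q μ)^[k] r := by
  induction k generalizing p r with
  | zero => simp
  | succ n ih => simp only [Function.iterate_succ_apply, qDunkl1_add, ih]

lemma qDunkl1_iterate_X_pow {q : ℂ} (hq : q ≠ 0) (μ : ℝ) (k b : ℕ) :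
    (qDunkl1 q μ)^[k] (X ^ b)
      = (∏ i ∈ Finset.range k, muBracket q μ (b - i)) • X ^ (b - k) := by
  induction k with
  | zero => simp
  | succ n ih =>
    rw [Function.iterate_succ_apply', ih, qDunkl1_smul, qDunkl1_X_pow hq,
      smul_smul, Finset.prod_range_succ, Nat.sub_sub]

lemma prod_shift (f : ℕ → ℂ) (k : ℕ) :
    ∏ i ∈ Finset.range k, f (k - i) = ∏ j ∈ Finset.Icc 1 k, f j := by
  have : Finset.Icc 1 k = Finset.Ico 1 (k+1) := by rw [Finset.Ico_add_one_right_eq_Icc]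
  rw [this, Finset.prod_Ico_eq_prod_range]
  simp only [Nat.add_sub_cancel]
  rw [← Finset.prod_range_reflect (fun i => f (1 + i)) k]
  apply Finset.prod_congr rfl
  intro j hj
  have : j < k := Finset.mem_range.mp hj
  congr 1
  omega

lemma eval0_qDunkl1_iterate {q : ℂ} (hq : q ≠ 0) (μ : ℝ) (k : ℕ) (Q : ℂ[X]) :
    Polynomial.eval 0 ((qDunkl1 q μ)^[k] Q)
      = (∏ j ∈ Finset.Icc 1 k, muBracket q μ j) * Q.coeff k := by
  induction Q using Polynomial.induction_on' with
  | add p r hp hr =>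
    rw [qDunkl1_iterate_add, eval_add, hp, hr, coeff_add, mul_add]
  | monomial n a =>
    rw [← C_mul_X_pow_eq_monomial, ← smul_eq_C_mul, qDunkl1_iterate_smul,
      eval_smul, qDunkl1_iterate_X_pow hq, eval_smul, eval_pow, eval_X,
      coeff_smul, coeff_X_pow]
    rcases lt_trichotomy n k with h | h | h
    · have hz : muBracket q μ (n - n) = 0 := by rw [Nat.sub_self, muBracket_zero]
      rw [Finset.prod_eq_zero (Finset.mem_range.mpr h) hz, if_neg (by omega : ¬ k = n)]
      simp
    · subst h
      rw [Nat.sub_self, pow_zero, prod_shift]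
      simp [smul_eq_mul]
      ring
    · have h1 : n - k ≠ 0 := Nat.sub_ne_zero_of_lt h
      rw [zero_pow h1, if_neg (by omega : ¬ k = n)]
      simp
lemma qFischer_eq {q : ℂ} (hq : q ≠ 0) (μ : ℝ) (P Q : ℂ[X]) :
    qFischer q μ P Q
      = ∑ k ∈ Finset.range (P.natDegree + 1),
          (starRingEnd ℂ) (P.coeff k)
            * ((∏ j ∈ Finset.Icc 1 k, muBracket q μ j) * Q.coeff k) := by
  rw [qFischer, eval_finset_sum]
  refine Finset.sum_congr rfl fun k _ => ?_
  rw [eval_smul, eval0_qDunkl1_iterate hq, smul_eq_mul]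

lemma qFischer_eq' {q : ℂ} (hq : q ≠ 0) (μ : ℝ) (P Q : ℂ[X]) (N : ℕ)
    (hN : P.natDegree < N) :
    qFischer q μ P Q
      = ∑ k ∈ Finset.range N,
          (starRingEnd ℂ) (P.coeff k)
            * ((∏ j ∈ Finset.Icc 1 k, muBracket q μ j) * Q.coeff k) := by
  rw [qFischer_eq hq]
  apply Finset.sum_subset
  · exact Finset.range_subset_range.mpr hN
  · intro k _ hk
    have : P.natDegree < k := by
      simp only [Finset.mem_range, not_lt] at hk; omega
    rw [coeff_eq_zero_of_natDegree_lt this, map_zero, zero_mul]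
noncomputable def muBracketR (q μ : ℝ) (j : ℕ) : ℝ :=
  (q ^ (μ + (j : ℝ)) - q ^ (-(μ + (j : ℝ)))) / (q - q⁻¹)
    - (-1 : ℝ) ^ j * ((q ^ μ - q ^ (-μ)) / (q - q⁻¹))

lemma muBracket_ofReal {q : ℝ} (hq0 : 0 < q) (μ : ℝ) (j : ℕ) :
    muBracket (q : ℂ) μ j = ((muBracketR q μ j : ℝ) : ℂ) := by
  rw [muBracket, muBracketR]
  push_cast [Complex.ofReal_cpow hq0.le]
  ring_nf
lemma muBracketR_inv {q : ℝ} (hq0 : 0 < q) (μ : ℝ) (j : ℕ) :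
    muBracketR q⁻¹ μ j = muBracketR q μ j := by
  have h : ∀ x : ℝ, q⁻¹ ^ x = q ^ (-x) := fun x => by
    rw [Real.inv_rpow hq0.le, Real.rpow_neg hq0.le]
  rw [muBracketR, muBracketR, h, h, h, h, neg_neg, neg_neg,
    show q⁻¹ - q⁻¹⁻¹ = -(q - q⁻¹) by rw [inv_inv]; ring, div_neg, div_neg]
  ring

lemma muBracketR_pos_of_one_lt {q : ℝ} (hq : 1 < q) {μ : ℝ} (hμ : 0 < μ)
    {j : ℕ} (hj : 1 ≤ j) : 0 < muBracketR q μ j := by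
  have hq0 : (0:ℝ) < q := lt_trans one_pos hq
  have hd : 0 < q - q⁻¹ := by
    have : q⁻¹ < 1 := inv_lt_one_of_one_lt₀ hq
    linarith
  have mono : ∀ x y : ℝ, x < y → q ^ x - q ^ (-x) < q ^ y - q ^ (-y) := by
    intro x y hxy
    have h1 : q ^ x < q ^ y := (Real.rpow_lt_rpow_left_iff hq).mpr hxy
    have h2 : q ^ (-y) < q ^ (-x) := (Real.rpow_lt_rpow_left_iff hq).mpr (by linarith)
    linarith
  have hfμ : 0 < q ^ μ - q ^ (-μ) := by
    have := mono (-μ) μ (by linarith)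
    rw [neg_neg] at this; linarith
  have hlt : q ^ μ - q ^ (-μ) < q ^ (μ + (j:ℝ)) - q ^ (-(μ + (j:ℝ))) := by
    apply mono; have : (1:ℝ) ≤ (j:ℝ) := by exact_mod_cast hj
    linarith
  have hsle : (-1 : ℝ) ^ j * (q ^ μ - q ^ (-μ)) ≤ q ^ μ - q ^ (-μ) := by
    have h1 : ((-1 : ℝ) ^ j) ≤ 1 := by
      rcases Nat.even_or_odd j with h | h
      · rw [h.neg_one_pow]
      · rw [h.neg_one_pow]; linarith
    nlinarith
  have heq : muBracketR q μ j
      = ((q ^ (μ + (j:ℝ)) - q ^ (-(μ + (j:ℝ)))) - (-1:ℝ) ^ j * (q ^ μ - q ^ (-μ))) / (q - q⁻¹) := by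
    rw [muBracketR]; ring
  rw [heq]
  exact div_pos (by linarith) hd
lemma muBracketR_pos {q : ℝ} (hq0 : 0 < q) (hq1 : q ≠ 1) {μ : ℝ} (hμ : 0 < μ)
    {j : ℕ} (hj : 1 ≤ j) : 0 < muBracketR q μ j := by
  rcases lt_or_gt_of_ne hq1 with h | h
  · have hinv : 1 < q⁻¹ := (one_lt_inv₀ hq0).mpr h
    have := muBracketR_pos_of_one_lt hinv hμ hj (q := q⁻¹)
    rwa [muBracketR_inv hq0] at this
  · exact muBracketR_pos_of_one_lt h hμ hj

/-- For positive real `q ≠ 1` and `μ > 0`, the q-Dunkl-Fischer pairing satisfies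
`⟨x^a, x^b⟩ = δ_{a,b} ∏_{j=1}^a [μ, j; q]` and is a positive definite Hermitian inner
product on complex polynomials. -/
theorem qFischer_inner_product (q : ℝ) (hq0 : 0 < q) (hq1 : q ≠ 1) (μ : ℝ) (hμ : 0 < μ) :
    (∀ a b : ℕ,
      qFischer (q : ℂ) μ (X ^ a) (X ^ b)
        = if a = b then ∏ j ∈ Finset.Icc 1 a, muBracket (q : ℂ) μ j else 0)
    ∧ (∀ P Q : Polynomial ℂ, qFischer (q : ℂ) μ P Q = (starRingEnd ℂ) (qFischer (q : ℂ) μ Q P))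
    ∧ (∀ P : Polynomial ℂ, P ≠ 0 →
        0 < (qFischer (q : ℂ) μ P P).re ∧ (qFischer (q : ℂ) μ P P).im = 0) := by
  have hqc : (q : ℂ) ≠ 0 := by exact_mod_cast hq0.ne'
  have hCk : ∀ k : ℕ, (∏ j ∈ Finset.Icc 1 k, muBracket (q : ℂ) μ j)
      = (((∏ j ∈ Finset.Icc 1 k, muBracketR q μ j : ℝ)) : ℂ) := by
    intro k
    rw [Complex.ofReal_prod]
    exact Finset.prod_congr rfl fun j _ => muBracket_ofReal hq0 μ j
  have hRk : ∀ k : ℕ, 0 < ∏ j ∈ Finset.Icc 1 k, muBracketR q μ j := by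
    intro k
    exact Finset.prod_pos fun j hj =>
      muBracketR_pos hq0 hq1 hμ (Finset.mem_Icc.mp hj).1
  refine ⟨?_, ?_, ?_⟩
  · intro a b
    rw [qFischer_eq hqc]
    rw [Finset.sum_eq_single a]
    · simp only [natDegree_X_pow, coeff_X_pow, if_pos rfl, map_one, one_mul]
      by_cases h : a = b
      · subst h; simp
      · rw [if_neg (by omega : ¬ a = b), if_neg h]; simp
    · intro k _ hk
      rw [coeff_X_pow, if_neg hk, map_zero, zero_mul]
    · intro h
      simp at h
  · intro P Q
    set N := max P.natDegree Q.natDegree + 1 with hN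
    rw [qFischer_eq' hqc μ P Q N (by omega), qFischer_eq' hqc μ Q P N (by omega), map_sum]
    refine Finset.sum_congr rfl fun k _ => ?_
    rw [hCk, map_mul, map_mul, Complex.conj_conj, Complex.conj_ofReal]
    ring
  · intro P hP
    have key : qFischer (q : ℂ) μ P P
        = (((∑ k ∈ Finset.range (P.natDegree + 1),
            (∏ j ∈ Finset.Icc 1 k, muBracketR q μ j) * Complex.normSq (P.coeff k) : ℝ)) : ℂ) := by
      rw [qFischer_eq hqc, Complex.ofReal_sum]
      refine Finset.sum_congr rfl fun k _ => ?_
      rw [hCk, Complex.ofReal_mul]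
      calc (starRingEnd ℂ) (P.coeff k)
            * (((∏ j ∈ Finset.Icc 1 k, muBracketR q μ j : ℝ) : ℂ) * P.coeff k)
          = ((∏ j ∈ Finset.Icc 1 k, muBracketR q μ j : ℝ) : ℂ)
              * (P.coeff k * (starRingEnd ℂ) (P.coeff k)) := by ring
        _ = _ := by rw [Complex.mul_conj]
    have hpos : 0 < ∑ k ∈ Finset.range (P.natDegree + 1),
        (∏ j ∈ Finset.Icc 1 k, muBracketR q μ j) * Complex.normSq (P.coeff k) := by
      apply Finset.sum_pos'
      · exact fun k _ => mul_nonneg (hRk k).le (Complex.normSq_nonneg _)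
      · refine ⟨P.natDegree, Finset.self_mem_range_succ _, ?_⟩
        exact mul_pos (hRk _)
          (Complex.normSq_pos.mpr (Polynomial.leadingCoeff_ne_zero.mpr hP))
    constructor
    · rw [key, Complex.ofReal_re]; exact hpos
    · rw [key, Complex.ofReal_im]
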